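/- arXiv:math/0603424 — 2 statements merged into one kernel-verified Lean document; each statement's English description precedes it below -/
import Mathlib

section
/- The function φ₈(p,q) = p·q³/(1 + p²)² + (3/2)·p·q/(1 + p²) satisfies the equation (1 + p²)φ_pp + 2pq·φ_pq + (1 + q²)φ_qq = 0 for all real p, q. -/
noncomputable def pd₁ (f : ℝ → ℝ → ℝ) : ℝ → ℝ → ℝ := fun p q => deriv (fun x => f x q) p
noncomputable def pd₂ (f : ℝ → ℝ → ℝ) : ℝ → ℝ → ℝ := fun p q => deriv (fun y => f p y) q

private lemma hden (p : ℝ) : (1 : ℝ) + p ^ 2 ≠ 0 := by positivity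

private lemma hd_base (p : ℝ) : HasDerivAt (fun x : ℝ => 1 + x ^ 2) (2 * p) p := by
  simpa using (hasDerivAt_pow 2 p).const_add 1

-- first derivative in p of f
private lemma L1 (q p : ℝ) :
    HasDerivAt (fun x : ℝ => x * q ^ 3 / (1 + x ^ 2) ^ 2 + (3 / 2) * (x * q) / (1 + x ^ 2))
      (q ^ 3 * (1 - 3 * p ^ 2) / (1 + p ^ 2) ^ 3 + (3 / 2) * q * (1 - p ^ 2) / (1 + p ^ 2) ^ 2) p := by
  have hne := hden p
  have h1 := hd_base p
  have h3 : HasDerivAt (fun x : ℝ => x * q ^ 3) (1 * q ^ 3) p := (hasDerivAt_id p).mul_const _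
  have h5 : HasDerivAt (fun x : ℝ => (3 / 2) * (x * q)) ((3 / 2) * (1 * q)) p :=
    ((hasDerivAt_id p).mul_const q).const_mul _
  have hA := h3.div (h1.pow 2) (pow_ne_zero 2 hne)
  have hB := h5.div h1 hne
  have h := hA.add hB
  refine h.congr_deriv ?_
  simp only [Pi.pow_apply, Nat.cast_ofNat]
  field_simp
  ring

-- second derivative in p of f
private lemma L2 (q p : ℝ) :
    HasDerivAt (fun x : ℝ => q ^ 3 * (1 - 3 * x ^ 2) / (1 + x ^ 2) ^ 3 + (3 / 2) * q * (1 - x ^ 2) / (1 + x ^ 2) ^ 2)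
      (-12 * p * q ^ 3 * (1 - p ^ 2) / (1 + p ^ 2) ^ 4 + (-3) * p * q * (3 - p ^ 2) / (1 + p ^ 2) ^ 3) p := by
  have hne := hden p
  have h1 := hd_base p
  have hn1 : HasDerivAt (fun x : ℝ => q ^ 3 * (1 - 3 * x ^ 2)) (q ^ 3 * (-(3 * (2 * p ^ 1)))) p := by
    exact (((hasDerivAt_pow 2 p).const_mul 3).const_sub 1).const_mul _
  have hn2 : HasDerivAt (fun x : ℝ => (3 / 2) * q * (1 - x ^ 2)) ((3 / 2) * q * (-(2 * p ^ 1))) p := by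
    exact ((hasDerivAt_pow 2 p).const_sub 1).const_mul _
  have hA := hn1.div (h1.pow 3) (pow_ne_zero 3 hne)
  have hB := hn2.div (h1.pow 2) (pow_ne_zero 2 hne)
  have h := hA.add hB
  refine h.congr_deriv ?_
  simp only [Pi.pow_apply, Nat.cast_ofNat]
  field_simp
  ring

-- derivative in q of f
private lemma M1 (p q : ℝ) :
    HasDerivAt (fun y : ℝ => p * y ^ 3 / (1 + p ^ 2) ^ 2 + (3 / 2) * (p * y) / (1 + p ^ 2))
      (3 * p * q ^ 2 / (1 + p ^ 2) ^ 2 + (3 / 2) * p / (1 + p ^ 2)) q := by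
  have hne := hden p
  have hA : HasDerivAt (fun y : ℝ => p * y ^ 3 / (1 + p ^ 2) ^ 2)
      (p * (3 * q ^ 2) / (1 + p ^ 2) ^ 2) q := by
    simpa using (((hasDerivAt_pow 3 q).const_mul p).div_const ((1 + p ^ 2) ^ 2))
  have hB : HasDerivAt (fun y : ℝ => (3 / 2) * (p * y) / (1 + p ^ 2))
      ((3 / 2) * (p * 1) / (1 + p ^ 2)) q :=
    (((hasDerivAt_id q).const_mul p).const_mul (3 / 2)).div_const _
  have h := hA.add hB
  refine h.congr_deriv ?_
  ring

-- derivative in p of (deriv in q of f)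
private lemma M2 (q p : ℝ) :
    HasDerivAt (fun x : ℝ => 3 * x * q ^ 2 / (1 + x ^ 2) ^ 2 + (3 / 2) * x / (1 + x ^ 2))
      (3 * q ^ 2 * (1 - 3 * p ^ 2) / (1 + p ^ 2) ^ 3 + (3 / 2) * (1 - p ^ 2) / (1 + p ^ 2) ^ 2) p := by
  have hne := hden p
  have h1 := hd_base p
  have hn1 : HasDerivAt (fun x : ℝ => 3 * x * q ^ 2) (3 * q ^ 2) p := by
    have : HasDerivAt (fun x : ℝ => 3 * x * q ^ 2) (3 * 1 * q ^ 2) p :=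
      (((hasDerivAt_id p).const_mul 3).mul_const _)
    simpa using this
  have hn2 : HasDerivAt (fun x : ℝ => (3 / 2) * x) ((3 / 2) * 1) p := (hasDerivAt_id p).const_mul _
  have hA := hn1.div (h1.pow 2) (pow_ne_zero 2 hne)
  have hB := hn2.div h1 hne
  have h := hA.add hB
  refine h.congr_deriv ?_
  simp only [Pi.pow_apply, Nat.cast_ofNat]
  field_simp
  ring

-- second derivative in q
private lemma M3 (p q : ℝ) :
    HasDerivAt (fun y : ℝ => 3 * p * y ^ 2 / (1 + p ^ 2) ^ 2 + (3 / 2) * p / (1 + p ^ 2))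
      (6 * p * q / (1 + p ^ 2) ^ 2) q := by
  have hA : HasDerivAt (fun y : ℝ => 3 * p * y ^ 2 / (1 + p ^ 2) ^ 2)
      (3 * p * (2 * q ^ 1) / (1 + p ^ 2) ^ 2) q :=
    (((hasDerivAt_pow 2 q).const_mul (3 * p)).div_const _)
  have h := hA.add_const ((3 / 2) * p / (1 + p ^ 2))
  refine h.congr_deriv ?_
  ring

theorem phi_solves_legendre_eq :
    ∀ p q : ℝ,
      (1 + p ^ 2) * pd₁ (pd₁ (fun a b => a * b ^ 3 / (1 + a ^ 2) ^ 2 + (3 / 2) * (a * b) / (1 + a ^ 2))) p q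
        + 2 * p * q * pd₁ (pd₂ (fun a b => a * b ^ 3 / (1 + a ^ 2) ^ 2 + (3 / 2) * (a * b) / (1 + a ^ 2))) p q
        + (1 + q ^ 2) * pd₂ (pd₂ (fun a b => a * b ^ 3 / (1 + a ^ 2) ^ 2 + (3 / 2) * (a * b) / (1 + a ^ 2))) p q = 0 := by
  intro p q
  set f : ℝ → ℝ → ℝ := fun a b => a * b ^ 3 / (1 + a ^ 2) ^ 2 + (3 / 2) * (a * b) / (1 + a ^ 2) with hf
  have hpd1 : pd₁ f = fun p q =>
      q ^ 3 * (1 - 3 * p ^ 2) / (1 + p ^ 2) ^ 3 + (3 / 2) * q * (1 - p ^ 2) / (1 + p ^ 2) ^ 2 := by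
    funext a b
    exact (L1 b a).deriv
  have hpd2 : pd₂ f = fun p q =>
      3 * p * q ^ 2 / (1 + p ^ 2) ^ 2 + (3 / 2) * p / (1 + p ^ 2) := by
    funext a b
    exact (M1 a b).deriv
  have h11 : pd₁ (pd₁ f) p q =
      -12 * p * q ^ 3 * (1 - p ^ 2) / (1 + p ^ 2) ^ 4 + (-3) * p * q * (3 - p ^ 2) / (1 + p ^ 2) ^ 3 := by
    rw [hpd1]
    exact (L2 q p).deriv
  have h12 : pd₁ (pd₂ f) p q =
      3 * q ^ 2 * (1 - 3 * p ^ 2) / (1 + p ^ 2) ^ 3 + (3 / 2) * (1 - p ^ 2) / (1 + p ^ 2) ^ 2 := by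
    rw [hpd2]
    exact (M2 q p).deriv
  have h22 : pd₂ (pd₂ f) p q = 6 * p * q / (1 + p ^ 2) ^ 2 := by
    rw [hpd2]
    exact (M3 p q).deriv
  rw [h11, h12, h22]
  have hne := hden p
  field_simp
  ring
end

section
/- If φ(p,q) is a sufficiently smooth solution of (1 + p²)φ_pp + 2pq·φ_pq + (1 + q²)φ_qq = 0 on ℝ², then ψ(p,q) = −q·φ + (1 + q²)·φ_q + pq·φ_p is also a solution of the same equation. -/
noncomputable def D1 (F : ℝ × ℝ → ℝ) : ℝ × ℝ → ℝ := fun z => fderiv ℝ F z (1, 0)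
noncomputable def D2 (F : ℝ × ℝ → ℝ) : ℝ × ℝ → ℝ := fun z => fderiv ℝ F z (0, 1)

lemma hasDerivAt_D1 {F : ℝ × ℝ → ℝ} {p q : ℝ} (hF : DifferentiableAt ℝ F (p, q)) :
    HasDerivAt (fun x => F (x, q)) (D1 F (p, q)) p := by
  have h : HasDerivAt (fun x : ℝ => (x, q)) ((1 : ℝ), (0 : ℝ)) p :=
    (hasDerivAt_id p).prodMk (hasDerivAt_const p q)
  exact hF.hasFDerivAt.comp_hasDerivAt p h

lemma hasDerivAt_D2 {F : ℝ × ℝ → ℝ} {p q : ℝ} (hF : DifferentiableAt ℝ F (p, q)) :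
    HasDerivAt (fun y => F (p, y)) (D2 F (p, q)) q := by
  have h : HasDerivAt (fun y : ℝ => (p, y)) ((0 : ℝ), (1 : ℝ)) q :=
    (hasDerivAt_const q p).prodMk (hasDerivAt_id q)
  exact hF.hasFDerivAt.comp_hasDerivAt q h

lemma contDiff_D1 {F : ℝ × ℝ → ℝ} {n m : WithTop ℕ∞} (hF : ContDiff ℝ n F) (h : m + 1 ≤ n) :
    ContDiff ℝ m (D1 F) := (hF.fderiv_right h).clm_apply contDiff_const

lemma contDiff_D2 {F : ℝ × ℝ → ℝ} {n m : WithTop ℕ∞} (hF : ContDiff ℝ n F) (h : m + 1 ≤ n) :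
    ContDiff ℝ m (D2 F) := (hF.fderiv_right h).clm_apply contDiff_const

lemma comm2 {F : ℝ × ℝ → ℝ} (hF : ContDiff ℝ 2 F) (z v w : ℝ × ℝ) :
    fderiv ℝ (fun x => fderiv ℝ F x v) z w = fderiv ℝ (fun x => fderiv ℝ F x w) z v := by
  have hd : Differentiable ℝ (fderiv ℝ F) :=
    (hF.fderiv_right (m := 1) (by norm_num)).differentiable (by norm_num)
  have h1 : ∀ y, HasFDerivAt F (fderiv ℝ F y) y := fun y =>
    (hF.differentiable (by norm_num) y).hasFDerivAt
  have h2 : HasFDerivAt (fderiv ℝ F) (fderiv ℝ (fderiv ℝ F) z) z := (hd z).hasFDerivAt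
  have key : ∀ u : ℝ × ℝ, fderiv ℝ (fun x => fderiv ℝ F x u) z
      = (fderiv ℝ (fderiv ℝ F) z).flip u := by
    intro u
    rw [fderiv_clm_apply (hd z) (differentiableAt_const u)]
    simp
  rw [key v, key w]
  simp only [ContinuousLinearMap.flip_apply]
  exact second_derivative_symmetric h1 h2 w v

theorem recursion_preserves_solutions
    (φ : ℝ → ℝ → ℝ) (hφ : ContDiff ℝ 3 (fun z : ℝ × ℝ => φ z.1 z.2))
    (hsol : ∀ p q : ℝ,
      (1 + p ^ 2) * pd₁ (pd₁ φ) p q + 2 * p * q * pd₁ (pd₂ φ) p q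
        + (1 + q ^ 2) * pd₂ (pd₂ φ) p q = 0) :
    ∀ p q : ℝ,
      (1 + p ^ 2) * pd₁ (pd₁ (fun p q => -q * φ p q + (1 + q ^ 2) * pd₂ φ p q + p * q * pd₁ φ p q)) p q
        + 2 * p * q * pd₁ (pd₂ (fun p q => -q * φ p q + (1 + q ^ 2) * pd₂ φ p q + p * q * pd₁ φ p q)) p q
        + (1 + q ^ 2) * pd₂ (pd₂ (fun p q => -q * φ p q + (1 + q ^ 2) * pd₂ φ p q + p * q * pd₁ φ p q)) p q = 0 := by
  set F : ℝ × ℝ → ℝ := fun z => φ z.1 z.2 with hFdef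
  have hF3 : ContDiff ℝ 3 F := hφ
  -- smoothness ladder
  have cF1 : ContDiff ℝ 2 (D1 F) := contDiff_D1 hF3 (by norm_num)
  have cF2 : ContDiff ℝ 2 (D2 F) := contDiff_D2 hF3 (by norm_num)
  have cF11 : ContDiff ℝ 1 (D1 (D1 F)) := contDiff_D1 cF1 (by norm_num)
  have cF12 : ContDiff ℝ 1 (D2 (D1 F)) := contDiff_D2 cF1 (by norm_num)
  have cF21 : ContDiff ℝ 1 (D1 (D2 F)) := contDiff_D1 cF2 (by norm_num)
  have cF22 : ContDiff ℝ 1 (D2 (D2 F)) := contDiff_D2 cF2 (by norm_num)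
  have dF : Differentiable ℝ F := hF3.differentiable (by norm_num)
  have dF1 : Differentiable ℝ (D1 F) := cF1.differentiable (by norm_num)
  have dF2 : Differentiable ℝ (D2 F) := cF2.differentiable (by norm_num)
  have dF11 : Differentiable ℝ (D1 (D1 F)) := cF11.differentiable (by norm_num)
  have dF12 : Differentiable ℝ (D2 (D1 F)) := cF12.differentiable (by norm_num)
  have dF21 : Differentiable ℝ (D1 (D2 F)) := cF21.differentiable (by norm_num)
  have dF22 : Differentiable ℝ (D2 (D2 F)) := cF22.differentiable (by norm_num)
  -- first-order bridges
  have hp1 : ∀ p q : ℝ, deriv (fun x => φ x q) p = D1 F (p, q) := fun p q =>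
    (hasDerivAt_D1 (dF (p, q))).deriv
  have hp2 : ∀ p q : ℝ, deriv (fun y => φ p y) q = D2 F (p, q) := fun p q =>
    (hasDerivAt_D2 (dF (p, q))).deriv
  have r11 : ∀ p q : ℝ, deriv (fun x => D1 F (x, q)) p = D1 (D1 F) (p, q) := fun p q =>
    (hasDerivAt_D1 (dF1 (p, q))).deriv
  have r12 : ∀ p q : ℝ, deriv (fun y => D1 F (p, y)) q = D2 (D1 F) (p, q) := fun p q =>
    (hasDerivAt_D2 (dF1 (p, q))).deriv
  have r21 : ∀ p q : ℝ, deriv (fun x => D2 F (x, q)) p = D1 (D2 F) (p, q) := fun p q =>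
    (hasDerivAt_D1 (dF2 (p, q))).deriv
  have r22 : ∀ p q : ℝ, deriv (fun y => D2 F (p, y)) q = D2 (D2 F) (p, q) := fun p q =>
    (hasDerivAt_D2 (dF2 (p, q))).deriv
  -- the PDE in D-language
  have hE : ∀ p q : ℝ, (1 + p ^ 2) * D1 (D1 F) (p, q) + 2 * p * q * D1 (D2 F) (p, q)
      + (1 + q ^ 2) * D2 (D2 F) (p, q) = 0 := by
    intro p q
    have h := hsol p q
    simp only [pd₁, pd₂, hp1, hp2, r11, r21, r22] at h
    exact h
  -- derivatives of the PDE
  have hEp : ∀ p q : ℝ, 2 * p * D1 (D1 F) (p, q) + (1 + p ^ 2) * D1 (D1 (D1 F)) (p, q)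
      + 2 * q * D1 (D2 F) (p, q) + 2 * p * q * D1 (D1 (D2 F)) (p, q)
      + (1 + q ^ 2) * D1 (D2 (D2 F)) (p, q) = 0 := by
    intro p q
    have H := ((((hasDerivAt_pow 2 p).const_add 1).mul (hasDerivAt_D1 (dF11 (p, q)))).add
        ((((hasDerivAt_id' p).const_mul 2).mul_const q).mul (hasDerivAt_D1 (dF21 (p, q))))).add
        ((hasDerivAt_D1 (dF22 (p, q))).const_mul (1 + q ^ 2))
    have hz := (H.congr_of_eventuallyEq
      (Filter.Eventually.of_forall fun x => (hE x q).symm)).unique (hasDerivAt_const p 0)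
    linear_combination hz
  have hEq : ∀ p q : ℝ, (1 + p ^ 2) * D2 (D1 (D1 F)) (p, q) + 2 * p * D1 (D2 F) (p, q)
      + 2 * p * q * D2 (D1 (D2 F)) (p, q) + 2 * q * D2 (D2 F) (p, q)
      + (1 + q ^ 2) * D2 (D2 (D2 F)) (p, q) = 0 := by
    intro p q
    have H := (((hasDerivAt_D2 (dF11 (p, q))).const_mul (1 + p ^ 2)).add
        (((hasDerivAt_id' q).const_mul (2 * p)).mul (hasDerivAt_D2 (dF21 (p, q))))).add
        (((hasDerivAt_pow 2 q).const_add 1).mul (hasDerivAt_D2 (dF22 (p, q))))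
    have hz := (H.congr_of_eventuallyEq
      (Filter.Eventually.of_forall fun x => (hE p x).symm)).unique (hasDerivAt_const q 0)
    linear_combination hz
  -- first-level derivatives of ψ
  have g1 : ∀ p q : ℝ, deriv (fun x => -q * φ x q + (1 + q ^ 2) * D2 F (x, q)
      + x * q * D1 F (x, q)) p
      = (1 + q ^ 2) * D1 (D2 F) (p, q) + p * q * D1 (D1 F) (p, q) := by
    intro p q
    have H := (((hasDerivAt_D1 (dF (p, q))).const_mul (-q)).add
        ((hasDerivAt_D1 (dF2 (p, q))).const_mul (1 + q ^ 2))).add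
        (((hasDerivAt_id' p).mul_const q).mul (hasDerivAt_D1 (dF1 (p, q))))
    exact H.deriv.trans (by ring)
  have g2 : ∀ p q : ℝ, deriv (fun y => -y * φ p y + (1 + y ^ 2) * D2 F (p, y)
      + p * y * D1 F (p, y)) q
      = -F (p, q) + q * D2 F (p, q) + (1 + q ^ 2) * D2 (D2 F) (p, q)
        + p * D1 F (p, q) + p * q * D2 (D1 F) (p, q) := by
    intro p q
    have H := ((((hasDerivAt_id' q).neg).mul (hasDerivAt_D2 (dF (p, q)))).add
        (((hasDerivAt_pow 2 q).const_add 1).mul (hasDerivAt_D2 (dF2 (p, q))))).add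
        (((hasDerivAt_id' q).const_mul p).mul (hasDerivAt_D2 (dF1 (p, q))))
    exact H.deriv.trans (by simp only [Pi.neg_apply]; ring)
  -- second-level derivatives of ψ
  have g11 : ∀ p q : ℝ, deriv (fun x => (1 + q ^ 2) * D1 (D2 F) (x, q)
      + x * q * D1 (D1 F) (x, q)) p
      = (1 + q ^ 2) * D1 (D1 (D2 F)) (p, q) + q * D1 (D1 F) (p, q)
        + p * q * D1 (D1 (D1 F)) (p, q) := by
    intro p q
    have H := ((hasDerivAt_D1 (dF21 (p, q))).const_mul (1 + q ^ 2)).add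
        (((hasDerivAt_id' p).mul_const q).mul (hasDerivAt_D1 (dF11 (p, q))))
    exact H.deriv.trans (by ring)
  have g12 : ∀ p q : ℝ, deriv (fun x => -F (x, q) + q * D2 F (x, q)
      + (1 + q ^ 2) * D2 (D2 F) (x, q) + x * D1 F (x, q) + x * q * D2 (D1 F) (x, q)) p
      = q * D1 (D2 F) (p, q) + (1 + q ^ 2) * D1 (D2 (D2 F)) (p, q)
        + p * D1 (D1 F) (p, q) + q * D2 (D1 F) (p, q) + p * q * D1 (D2 (D1 F)) (p, q) := by
    intro p q
    have H := (((((hasDerivAt_D1 (dF (p, q))).neg).add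
        ((hasDerivAt_D1 (dF2 (p, q))).const_mul q)).add
        ((hasDerivAt_D1 (dF22 (p, q))).const_mul (1 + q ^ 2))).add
        ((hasDerivAt_id' p).mul (hasDerivAt_D1 (dF1 (p, q))))).add
        (((hasDerivAt_id' p).mul_const q).mul (hasDerivAt_D1 (dF12 (p, q))))
    exact H.deriv.trans (by ring)
  have g22 : ∀ p q : ℝ, deriv (fun y => -F (p, y) + y * D2 F (p, y)
      + (1 + y ^ 2) * D2 (D2 F) (p, y) + p * D1 F (p, y) + p * y * D2 (D1 F) (p, y)) q
      = 3 * q * D2 (D2 F) (p, q) + (1 + q ^ 2) * D2 (D2 (D2 F)) (p, q)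
        + 2 * p * D2 (D1 F) (p, q) + p * q * D2 (D2 (D1 F)) (p, q) := by
    intro p q
    have H := (((((hasDerivAt_D2 (dF (p, q))).neg).add
        ((hasDerivAt_id' q).mul (hasDerivAt_D2 (dF2 (p, q))))).add
        (((hasDerivAt_pow 2 q).const_add 1).mul (hasDerivAt_D2 (dF22 (p, q))))).add
        ((hasDerivAt_D2 (dF1 (p, q))).const_mul p)).add
        (((hasDerivAt_id' q).const_mul p).mul (hasDerivAt_D2 (dF12 (p, q))))
    exact H.deriv.trans (by ring)
  -- symmetry of mixed partials
  have s1 : ∀ z : ℝ × ℝ, D2 (D1 F) z = D1 (D2 F) z := fun z =>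
    comm2 (hF3.of_le (by norm_num)) z (1, 0) (0, 1)
  have s2 : ∀ z : ℝ × ℝ, D2 (D1 (D1 F)) z = D1 (D2 (D1 F)) z := fun z =>
    comm2 cF1 z (1, 0) (0, 1)
  have s3 : ∀ z : ℝ × ℝ, D1 (D2 (D2 F)) z = D2 (D1 (D2 F)) z := fun z =>
    comm2 cF2 z (0, 1) (1, 0)
  have sfun : D2 (D1 F) = D1 (D2 F) := funext s1
  have s2' : ∀ z : ℝ × ℝ, D2 (D1 (D1 F)) z = D1 (D1 (D2 F)) z := fun z => by
    rw [s2 z, sfun]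
  -- assemble
  intro p q
  have e1 := hE p q
  have e2 := hEp p q
  have e3 := hEq p q
  simp only [sfun, s3, s2'] at e1 e2 e3
  simp only [pd₁, pd₂, hp1, hp2, g1, g2]
  simp only [g11, g12, g22]
  simp only [sfun, s3, s2']
  linear_combination q * e1 + p * q * e2 + (1 + q ^ 2) * e3
end
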